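/- arXiv:2005.07459 — 4 statements merged into one kernel-verified Lean document; each statement's English description precedes it below -/
import Mathlib

section
/- Let a₁ ≥ 0 and a₂, a₃, a₄, a₅, a₆ > 0 be constants, let R > 0 be a constant (representing (Kξ/S)·log₂(1+γ₀)), and for λ with a₂·λ − a₁ > a₃ define ā(λ) = a₃/(a₂·λ − a₁) ∈ (0,1) and the energy-efficiency function f(λ) = (R/λ)·(1 − ā(λ)) / (a₄ + a₅·ā(λ) + a₆·R·(1 − ā(λ))). Then f is a quasi-concave function of λ on the interval D = {λ : a₂·λ − a₁ > a₃}. (Quasi-concavity of the energy efficiency in the AP density, from the proof of Theorem 3.) -/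
open Real

/-- A quadratic with nonpositive leading coefficient is concave. -/
lemma concave_quad_aux {A B C : ℝ} {s : Set ℝ} (hs : Convex ℝ s) (hA : A ≤ 0) :
    ConcaveOn ℝ s (fun x => A * x ^ 2 + B * x + C) := by
  refine ⟨hs, ?_⟩
  intro x _ y _ a b ha hb hab
  simp only [smul_eq_mul]
  have hb' : b = 1 - a := by linarith
  subst hb'
  nlinarith [mul_nonneg (neg_nonneg.2 hA)
    (mul_nonneg (mul_nonneg ha hb) (sq_nonneg (x - y)))]

/-- Quasi-concavity of the downlink energy efficiency in the access-point density `λ`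
(from the proof of Theorem 3): the function
`f(λ) = (R/λ)·(1 − ā(λ)) / (a₄ + a₅·ā(λ) + a₆·R·(1 − ā(λ)))`, with
`ā(λ) = a₃/(a₂·λ − a₁)`, is quasi-concave on `D = {λ : a₂·λ − a₁ > a₃}`. -/
theorem energy_efficiency_quasiconcave_in_ap_density
    (a₁ a₂ a₃ a₄ a₅ a₆ R : ℝ)
    (h₁ : 0 ≤ a₁) (h₂ : 0 < a₂) (h₃ : 0 < a₃) (h₄ : 0 < a₄) (h₅ : 0 < a₅)
    (h₆ : 0 < a₆) (hR : 0 < R) :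
    QuasiconcaveOn ℝ {lam : ℝ | a₂ * lam - a₁ > a₃}
      (fun lam =>
        (R / lam) * (1 - a₃ / (a₂ * lam - a₁)) /
          (a₄ + a₅ * (a₃ / (a₂ * lam - a₁)) + a₆ * R * (1 - a₃ / (a₂ * lam - a₁)))) := by
  intro c
  set s : Set ℝ := {lam : ℝ | a₂ * lam - a₁ > a₃} with hs_def
  -- convexity of the domain
  have hsconv : Convex ℝ s := by
    have : s = Set.Ioi ((a₃ + a₁) / a₂) := by
      ext x
      simp only [hs_def, Set.mem_setOf_eq, Set.mem_Ioi, div_lt_iff₀ h₂]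
      constructor <;> intro h <;> nlinarith
    rw [this]; exact convex_Ioi _
  -- basic positivity facts on the domain
  have hfacts : ∀ x ∈ s, 0 < x ∧ 0 < a₂ * x - a₁ ∧
      0 < a₄ + a₅ * (a₃ / (a₂ * x - a₁)) + a₆ * R * (1 - a₃ / (a₂ * x - a₁)) ∧
      0 < (R / x) * (1 - a₃ / (a₂ * x - a₁)) := by
    intro x hx
    have hx' : a₂ * x - a₁ > a₃ := hx
    have ht : 0 < a₂ * x - a₁ := lt_trans h₃ hx'
    have hx0 : 0 < x := by nlinarith
    have habar : a₃ / (a₂ * x - a₁) < 1 := (div_lt_one ht).2 hx'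
    have habar0 : 0 < a₃ / (a₂ * x - a₁) := div_pos h₃ ht
    refine ⟨hx0, ht, ?_, ?_⟩
    · have := mul_pos (mul_pos h₆ hR) (sub_pos.2 habar)
      nlinarith
    · exact mul_pos (div_pos hR hx0) (sub_pos.2 habar)
  by_cases hc : c ≤ 0
  · -- the superlevel set is the whole (convex) domain
    have : {x ∈ s | c ≤ (R / x) * (1 - a₃ / (a₂ * x - a₁)) /
        (a₄ + a₅ * (a₃ / (a₂ * x - a₁)) + a₆ * R * (1 - a₃ / (a₂ * x - a₁)))} = s := by
      ext x
      simp only [Set.mem_sep_iff, and_iff_left_iff_imp]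
      intro hx
      obtain ⟨_, _, hD, hN⟩ := hfacts x hx
      exact le_trans hc (le_of_lt (div_pos hN hD))
    rw [this]; exact hsconv
  · push_neg at hc
    -- rewrite the superlevel set via a concave quadratic
    set A : ℝ := -(c * (a₂ * (a₄ + a₆ * R))) with hA_def
    set B : ℝ := R * a₂ + c * (a₄ * a₁ - a₅ * a₃ + a₆ * R * (a₁ + a₃)) with hB_def
    set C : ℝ := -(R * (a₁ + a₃)) with hC_def
    have hA : A ≤ 0 := by
      have : 0 < c * (a₂ * (a₄ + a₆ * R)) := by positivity
      simp [hA_def]; linarith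
    have key : {x ∈ s | c ≤ (R / x) * (1 - a₃ / (a₂ * x - a₁)) /
        (a₄ + a₅ * (a₃ / (a₂ * x - a₁)) + a₆ * R * (1 - a₃ / (a₂ * x - a₁)))} =
        {x ∈ s | (0:ℝ) ≤ A * x ^ 2 + B * x + C} := by
      ext x
      simp only [Set.mem_sep_iff, and_congr_right_iff]
      intro hx
      obtain ⟨hx0, ht, hD, hN⟩ := hfacts x hx
      rw [le_div_iff₀ hD, ← sub_nonneg]
      have hexp : A * x ^ 2 + B * x + C =
          ((R / x) * (1 - a₃ / (a₂ * x - a₁)) -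
            c * (a₄ + a₅ * (a₃ / (a₂ * x - a₁)) + a₆ * R * (1 - a₃ / (a₂ * x - a₁)))) *
            (x * (a₂ * x - a₁)) := by
        have hne1 : a₂ * x - a₁ ≠ 0 := ht.ne'
        have hne2 : x ≠ 0 := hx0.ne'
        rw [hA_def, hB_def, hC_def]
        field_simp
        ring
      rw [hexp]
      exact (mul_nonneg_iff_of_pos_right (mul_pos hx0 ht)).symm
    rw [key]
    exact (concave_quad_aux hsconv hA).convex_ge 0
end

section
/- Let b₁, b₂, b₃, b₄, b₅, b₆, b₇, b₈ > 0 with b₄ > b₂, let C > 0 be a constant (representing (Kξ/S)·log₂(1+γ₀)), and for N with b₄·N − b₃ > 0 define b̄(N) = (b₁ + b₂·N)/(b₄·N − b₃) and the energy-efficiency function f(N) = C·(1 − b̄(N)) / (b₅ + b₆·N + b₇·b̄(N) + b₈·C·(1 − b̄(N))). Then f is a quasi-concave function of N on the interval D = {N : b₄·N − b₃ > 0 and b̄(N) < 1} = ((b₁+b₃)/(b₄−b₂), ∞). (Quasi-concavity of the energy efficiency in the number of AP antennas, from the proof of Theorem 4.) -/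
open Real

/-- Quasi-concavity of the downlink energy efficiency in the number of AP antennas `N`
(from the proof of Theorem 4): with `b̄(N) = (b₁ + b₂·N)/(b₄·N − b₃)` and
`f(N) = C·(1 − b̄(N)) / (b₅ + b₆·N + b₇·b̄(N) + b₈·C·(1 − b̄(N)))`, the domain
`D = {N : b₄·N − b₃ > 0 ∧ b̄(N) < 1}` equals the interval `((b₁+b₃)/(b₄−b₂), ∞)`,
and `f` is quasi-concave on it. -/
theorem energy_efficiency_quasiconcave_in_antennas
    (b₁ b₂ b₃ b₄ b₅ b₆ b₇ b₈ C : ℝ)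
    (h₁ : 0 < b₁) (h₂ : 0 < b₂) (h₃ : 0 < b₃) (h₄ : 0 < b₄) (h₅ : 0 < b₅)
    (h₆ : 0 < b₆) (h₇ : 0 < b₇) (h₈ : 0 < b₈) (h₄₂ : b₂ < b₄) (hC : 0 < C) :
    let bbar : ℝ → ℝ := fun N => (b₁ + b₂ * N) / (b₄ * N - b₃)
    let f : ℝ → ℝ := fun N =>
      C * (1 - bbar N) / (b₅ + b₆ * N + b₇ * bbar N + b₈ * C * (1 - bbar N))
    {N : ℝ | b₄ * N - b₃ > 0 ∧ bbar N < 1} = Set.Ioi ((b₁ + b₃) / (b₄ - b₂)) ∧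
      QuasiconcaveOn ℝ (Set.Ioi ((b₁ + b₃) / (b₄ - b₂))) f := by
  intro bbar f
  set a : ℝ := (b₁ + b₃) / (b₄ - b₂) with ha_def
  have hb42 : 0 < b₄ - b₂ := by linarith
  have ha : 0 < a := div_pos (by linarith) hb42
  -- basic facts on the domain
  have hden : ∀ N ∈ Set.Ioi a, 0 < b₄ * N - b₃ := by
    intro N hN
    have h : a < N := hN
    have : b₁ + b₃ < (b₄ - b₂) * N := by
      rw [ha_def, div_lt_iff₀ hb42] at h; linarith [h]
    nlinarith
  have hNpos : ∀ N ∈ Set.Ioi a, 0 < N := fun N hN => lt_trans ha hN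
  have hbbar_lt : ∀ N ∈ Set.Ioi a, bbar N < 1 := by
    intro N hN
    have hd := hden N hN
    rw [show bbar N = (b₁ + b₂ * N) / (b₄ * N - b₃) from rfl, div_lt_one hd]
    have h : a < N := hN
    rw [ha_def, div_lt_iff₀ hb42] at h
    nlinarith
  have hbbar_pos : ∀ N ∈ Set.Ioi a, 0 < bbar N := by
    intro N hN
    exact div_pos (by nlinarith [hNpos N hN]) (hden N hN)
  have hDpos : ∀ N ∈ Set.Ioi a,
      0 < b₅ + b₆ * N + b₇ * bbar N + b₈ * C * (1 - bbar N) := by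
    intro N hN
    have hp := hbbar_pos N hN
    have hl := hbbar_lt N hN
    have hn := hNpos N hN
    have h0 : 0 < b₈ * C * (1 - bbar N) := mul_pos (mul_pos h₈ hC) (by linarith)
    nlinarith
  -- set equality
  have hset : {N : ℝ | b₄ * N - b₃ > 0 ∧ bbar N < 1} = Set.Ioi a := by
    ext N
    simp only [Set.mem_setOf_eq, Set.mem_Ioi]
    constructor
    · rintro ⟨hd, hlt⟩
      rw [show bbar N = (b₁ + b₂ * N) / (b₄ * N - b₃) from rfl, div_lt_one hd] at hlt
      rw [ha_def, div_lt_iff₀ hb42]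
      nlinarith
    · intro hN
      exact ⟨hden N hN, hbbar_lt N hN⟩
  refine ⟨hset, ?_⟩
  -- convexity of bbar on Ioi a
  have hKnn : (0:ℝ) ≤ (b₁ * b₄ + b₂ * b₃) / b₄ := by positivity
  have hbconv : ConvexOn ℝ (Set.Ioi a) bbar := by
    have hinv : ConvexOn ℝ (Set.Ioi (0:ℝ)) (fun x : ℝ => x ^ (-1 : ℤ)) := convexOn_zpow (-1)
    have hcomp := hinv.comp_affineMap (AffineMap.lineMap (-b₃) (b₄ - b₃) : ℝ →ᵃ[ℝ] ℝ)
    have hpre : Set.Ioi a ⊆ (AffineMap.lineMap (-b₃) (b₄ - b₃) : ℝ →ᵃ[ℝ] ℝ) ⁻¹' Set.Ioi 0 := by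
      intro N hN
      simp only [Set.mem_preimage, AffineMap.lineMap_apply, Set.mem_Ioi]
      have := hden N hN
      simp only [vsub_eq_sub, vadd_eq_add, smul_eq_mul]
      nlinarith
    have h1 := hcomp.subset hpre (convex_Ioi a)
    have h2 := (h1.smul hKnn).add_const (b₂ / b₄)
    refine h2.congr ?_
    intro N hN
    have hd := (hden N hN).ne'
    have hb4 := h₄.ne'
    simp only [Function.comp, AffineMap.lineMap_apply, vsub_eq_sub, vadd_eq_add,
      smul_eq_mul, zpow_neg, zpow_one, Pi.add_apply]
    show _ = (b₁ + b₂ * N) / (b₄ * N - b₃)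
    rw [show N * (b₄ - b₃ - -b₃) + -b₃ = b₄ * N - b₃ by ring]
    field_simp
    ring
  -- quasiconcavity
  intro c
  by_cases hμ : 0 ≤ C + c * b₇ - c * b₈ * C
  · -- superlevel set equals superlevel of a concave function
    set g : ℝ → ℝ := fun N => (C - c * b₈ * C - c * b₅) + (-(c * b₆)) * N +
      (-((C + c * b₇ - c * b₈ * C) * bbar N)) with hg_def
    have hgconc : ConcaveOn ℝ (Set.Ioi a) g := by
      have hlin : ConcaveOn ℝ (Set.Ioi a) (fun N : ℝ => (C - c * b₈ * C - c * b₅) + (-(c * b₆)) * N) := by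
        have := ((-(c * b₆)) • (LinearMap.id : ℝ →ₗ[ℝ] ℝ)).concaveOn (convex_Ioi a)
        have h' := this.add_const (C - c * b₈ * C - c * b₅)
        refine h'.congr ?_
        intro N _
        simp [LinearMap.smul_apply, smul_eq_mul]
        ring
      have hsm : ConvexOn ℝ (Set.Ioi a) (fun N => (C + c * b₇ - c * b₈ * C) * bbar N) := by
        have := hbconv.smul hμ
        simpa [smul_eq_mul] using this
      exact hlin.add hsm.neg
    have hsup : {x ∈ Set.Ioi a | c ≤ f x} = {x ∈ Set.Ioi a | (0:ℝ) ≤ g x} := by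
      ext N
      simp only [Set.mem_setOf_eq, and_congr_right_iff]
      intro hN
      have hd := hDpos N hN
      rw [show f N = C * (1 - bbar N) / (b₅ + b₆ * N + b₇ * bbar N + b₈ * C * (1 - bbar N)) from rfl,
        le_div_iff₀ hd]
      have key : g N = C * (1 - bbar N) -
          c * (b₅ + b₆ * N + b₇ * bbar N + b₈ * C * (1 - bbar N)) := by
        simp only [hg_def]; ring
      constructor <;> intro h
      · linarith [key]
      · linarith [key]
    rw [show {x | x ∈ Set.Ioi a ∧ c ≤ f x} = {x ∈ Set.Ioi a | c ≤ f x} from rfl, hsup]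
    exact hgconc.quasiconcaveOn 0
  · push_neg at hμ
    by_cases hc : c ≤ 0
    · -- whole set
      have : {x | x ∈ Set.Ioi a ∧ c ≤ f x} = Set.Ioi a := by
        ext N
        simp only [Set.mem_setOf_eq, and_iff_left_iff_imp]
        intro hN
        have hfpos : 0 < f N := by
          refine div_pos ?_ (hDpos N hN)
          exact mul_pos hC (by linarith [hbbar_lt N hN])
        linarith
      rw [this]; exact convex_Ioi a
    · -- empty set
      push_neg at hc
      have hcb8 : 1 < c * b₈ := by
        by_contra h
        push_neg at h
        nlinarith
      have : {x | x ∈ Set.Ioi a ∧ c ≤ f x} = ∅ := by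
        ext N
        simp only [Set.mem_setOf_eq, Set.mem_empty_iff_false, iff_false, not_and]
        intro hN hcf
        have hd := hDpos N hN
        have h1 : 0 < 1 - bbar N := by linarith [hbbar_lt N hN]
        rw [show f N = C * (1 - bbar N) / (b₅ + b₆ * N + b₇ * bbar N + b₈ * C * (1 - bbar N)) from rfl,
          le_div_iff₀ hd] at hcf
        nlinarith [hbbar_pos N hN, hNpos N hN]
      rw [this]; exact convex_empty
end

section
/- Let b₁, b₂, b₃, b₄, b₅, b₆, b₇, b₈ > 0 with b₄ > b₂, let C > 0, and for N with b₄·N − b₃ > 0 define b̄(N) = (b₁ + b₂·N)/(b₄·N − b₃) and f(N) = C·(1 − b̄(N)) / (b₅ + b₆·N + b₇·b̄(N) + b₈·C·(1 − b̄(N))) on the domain D = ((b₁+b₃)/(b₄−b₂), ∞). If N₀ ∈ D is a stationary point of f, i.e. f′(N₀) = 0, then f attains its global maximum over D at N₀: f(N) ≤ f(N₀) for all N ∈ D. (Theorem 4: the optimal number of AP antennas is obtained by setting the first derivative of the energy efficiency to zero.) -/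
set_option maxHeartbeats 1000000


open Real


private lemma ee_aux_u (b₁ b₂ b₃ b₄ N c : ℝ)
    (hc : c = (b₁ + b₃) / (b₄ - b₂)) (hs : b₄ - b₂ ≠ 0) (h2' : b₄ * N - b₃ ≠ 0) :
    1 - (b₁ + b₂ * N) / (b₄ * N - b₃)
      = (b₄ - b₂) * (N - c) / (b₄ * N - b₃) := by
  have h2'' : N * b₄ - b₃ ≠ 0 := by rwa [mul_comm]
  subst hc; field_simp; ring

private lemma ee_aux_den (b₁ b₂ b₃ b₄ b₅ b₆ b₇ b₈ C N c : ℝ)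
    (hc : c = (b₁ + b₃) / (b₄ - b₂))
    (hs : b₄ - b₂ ≠ 0) (h1' : N - c ≠ 0) (h2' : b₄ * N - b₃ ≠ 0) :
    b₅ + b₆ * N + b₇ * ((b₁ + b₂ * N) / (b₄ * N - b₃))
        + b₈ * C * ((b₄ - b₂) * (N - c) / (b₄ * N - b₃))
        = (b₄ - b₂) * (N - c) / (b₄ * N - b₃) *
          (b₆ * b₄ / (b₄ - b₂) * (N - c)
            + (b₆ * (b₄ * c - b₃) + b₄ * (b₅ + b₆ * c) + b₇ * b₂) / (b₄ - b₂)
            + ((b₅ + b₆ * c) * (b₄ * c - b₃) + b₇ * (b₁ + b₂ * c)) / (b₄ - b₂) / (N - c)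
            + b₈ * C) := by
  subst hc
  have h1'' : N * (b₄ - b₂) - (b₁ + b₃) ≠ 0 := by
    intro h; apply h1'; field_simp; linarith [h]
  have h2'' : N * b₄ - b₃ ≠ 0 := by rwa [mul_comm]
  field_simp
  ring

/-- Theorem 4 (optimal number of AP antennas): a stationary point of the energy
efficiency `f(N) = C·(1 − b̄(N)) / (b₅ + b₆·N + b₇·b̄(N) + b₈·C·(1 − b̄(N)))`,
`b̄(N) = (b₁ + b₂·N)/(b₄·N − b₃)`, on the domain `D = ((b₁+b₃)/(b₄−b₂), ∞)` is a
global maximizer of `f` over `D`. -/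
theorem stationary_point_is_optimal_antennas
    (b₁ b₂ b₃ b₄ b₅ b₆ b₇ b₈ C : ℝ)
    (h₁ : 0 < b₁) (h₂ : 0 < b₂) (h₃ : 0 < b₃) (h₄ : 0 < b₄) (h₅ : 0 < b₅)
    (h₆ : 0 < b₆) (h₇ : 0 < b₇) (h₈ : 0 < b₈) (h₄₂ : b₂ < b₄) (hC : 0 < C)
    (f : ℝ → ℝ)
    (hf : f = fun N =>
      C * (1 - (b₁ + b₂ * N) / (b₄ * N - b₃)) /
        (b₅ + b₆ * N + b₇ * ((b₁ + b₂ * N) / (b₄ * N - b₃))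
          + b₈ * C * (1 - (b₁ + b₂ * N) / (b₄ * N - b₃))))
    (N₀ : ℝ) (hN₀ : N₀ ∈ Set.Ioi ((b₁ + b₃) / (b₄ - b₂)))
    (hstat : deriv f N₀ = 0) :
    ∀ N ∈ Set.Ioi ((b₁ + b₃) / (b₄ - b₂)), f N ≤ f N₀ := by
  set c : ℝ := (b₁ + b₃) / (b₄ - b₂) with hc
  have hsub : (0:ℝ) < b₄ - b₂ := by linarith
  have hcpos : 0 < c := div_pos (by linarith) hsub
  have hdc : 0 < b₄ * c - b₃ := by
    have h : b₄ * c - b₃ = (b₄ * b₁ + b₂ * b₃) / (b₄ - b₂) := by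
      rw [hc]; field_simp; ring
    rw [h]; positivity
  -- constants of the reparametrized function
  set a : ℝ := b₆ * b₄ / (b₄ - b₂) with ha
  set Γ : ℝ := (b₅ + b₆ * c) * (b₄ * c - b₃) + b₇ * (b₁ + b₂ * c) with hΓ
  set g : ℝ := Γ / (b₄ - b₂) with hg
  set bb : ℝ := (b₆ * (b₄ * c - b₃) + b₄ * (b₅ + b₆ * c) + b₇ * b₂) / (b₄ - b₂) with hbb
  have hapos : 0 < a := by rw [ha]; positivity
  have hΓpos : 0 < Γ := by rw [hΓ]; positivity
  have hgpos : 0 < g := by rw [hg]; positivity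
  have hbbpos : 0 < bb := by rw [hbb]; positivity
  set φ : ℝ → ℝ := fun N => a * (N - c) + bb + g / (N - c) + b₈ * C with hφ
  clear_value c a Γ g bb φ
  -- basic facts on the domain
  have hy : ∀ N ∈ Set.Ioi c, 0 < N - c := fun N hN => sub_pos.2 hN
  have hd : ∀ N ∈ Set.Ioi c, 0 < b₄ * N - b₃ := by
    intro N hN
    have h1 : 0 < N - c := hy N hN
    nlinarith [mul_pos h₄ h1]
  have hφpos : ∀ N ∈ Set.Ioi c, 0 < φ N := by
    intro N hN
    have h1 := hy N hN
    have p1 : 0 < a * (N - c) := mul_pos hapos h1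
    have p2 : 0 < g / (N - c) := div_pos hgpos h1
    have p3 : 0 < b₈ * C := mul_pos h₈ hC
    simp only [hφ]; linarith
  -- key identity : f = C / φ on the domain
  have hkey : ∀ N ∈ Set.Ioi c, f N = C / φ N := by
    intro N hN
    have h1 := hy N hN
    have h2 := hd N hN
    have h1' : N - c ≠ 0 := ne_of_gt h1
    have h2' : b₄ * N - b₃ ≠ 0 := ne_of_gt h2
    have hupos : 0 < (b₄ - b₂) * (N - c) / (b₄ * N - b₃) := by positivity
    have hu := ee_aux_u b₁ b₂ b₃ b₄ N c hc (ne_of_gt hsub) h2'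
    have hφeq : φ N = b₆ * b₄ / (b₄ - b₂) * (N - c)
        + (b₆ * (b₄ * c - b₃) + b₄ * (b₅ + b₆ * c) + b₇ * b₂) / (b₄ - b₂)
        + ((b₅ + b₆ * c) * (b₄ * c - b₃) + b₇ * (b₁ + b₂ * c)) / (b₄ - b₂) / (N - c)
        + b₈ * C := by
      simp only [hφ]
      rw [ha, hbb, hg, hΓ, div_div]
    have hDn : b₅ + b₆ * N + b₇ * ((b₁ + b₂ * N) / (b₄ * N - b₃))
        + b₈ * C * ((b₄ - b₂) * (N - c) / (b₄ * N - b₃))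
        = (b₄ - b₂) * (N - c) / (b₄ * N - b₃) * φ N := by
      rw [hφeq]
      exact ee_aux_den b₁ b₂ b₃ b₄ b₅ b₆ b₇ b₈ C N c hc (ne_of_gt hsub) h1' h2'
    simp only [hf]
    rw [hu, hDn, mul_comm ((b₄ - b₂) * (N - c) / (b₄ * N - b₃)) (φ N)]
    exact mul_div_mul_right C (φ N) (ne_of_gt hupos)
  -- derivative computation
  have hy₀ : 0 < N₀ - c := hy N₀ hN₀
  have hφ₀ : 0 < φ N₀ := hφpos N₀ hN₀
  have hev : f =ᶠ[nhds N₀] fun N => C / φ N :=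
    Filter.eventuallyEq_of_mem (Ioi_mem_nhds hN₀) hkey
  have hid : HasDerivAt (fun N : ℝ => N - c) 1 N₀ := (hasDerivAt_id N₀).sub_const c
  have hd1 : HasDerivAt (fun N => a * (N - c)) a N₀ := by
    simpa using hid.const_mul a
  have hd2 : HasDerivAt (fun N => g / (N - c)) (-(g / (N₀ - c) ^ 2)) N₀ := by
    have h := (hasDerivAt_const N₀ g).div hid (ne_of_gt hy₀)
    exact h.congr_deriv (by ring)
  have hφd : HasDerivAt φ (a - g / (N₀ - c) ^ 2) N₀ := by
    have h := ((hd1.add_const bb).add hd2).add_const (b₈ * C)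
    rw [hφ]; exact h.congr_deriv (by ring)
  have hfd : HasDerivAt (fun N => C / φ N)
      ((0 * φ N₀ - C * (a - g / (N₀ - c) ^ 2)) / (φ N₀) ^ 2) N₀ :=
    (hasDerivAt_const N₀ C).div hφd (ne_of_gt hφ₀)
  have hderiv : (0 * φ N₀ - C * (a - g / (N₀ - c) ^ 2)) / (φ N₀) ^ 2 = 0 := by
    rw [← hfd.deriv, ← Filter.EventuallyEq.deriv_eq hev]
    exact hstat
  have hnum : C * (a - g / (N₀ - c) ^ 2) = 0 := by
    have := (div_eq_zero_iff.1 hderiv).resolve_right (by positivity)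
    linarith
  have hag : a - g / (N₀ - c) ^ 2 = 0 := by
    rcases mul_eq_zero.1 hnum with h | h
    · exact absurd h (ne_of_gt hC)
    · exact h
  have hg2 : g = a * (N₀ - c) ^ 2 := by
    have hy2 : (N₀ - c) ^ 2 ≠ 0 := by positivity
    field_simp at hag
    linarith
  -- conclusion
  intro N hN
  rw [hkey N hN, hkey N₀ hN₀]
  have h1 := hy N hN
  have hφle : φ N₀ ≤ φ N := by
    have hdiff : φ N - φ N₀ = a * (N - N₀) ^ 2 / (N - c) := by
      simp only [hφ]
      rw [hg2]
      field_simp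
      ring
    nlinarith [div_nonneg (mul_nonneg hapos.le (sq_nonneg (N - N₀))) h1.le]
  gcongr
end

section
/- Consider γ̌(N) = A·((α−2)/(α·π·N·ρ_d) + (K−1)) + (ζ/(α·π·K·ρ_tr))·((K−1)·(α−2) + (α−1)/(N·ρ_d)) + λ·(K−1). If α > 2, K ≥ 2, A ≥ 1, λ > 0, ζ > 0, ρ_tr > 0 and ρ_d > 0, then for every N > 0 the SINR lower bound satisfies 1/γ̌(N) < 1/λ. In particular, an SINR target γ₀ is feasible for the constrained energy-efficiency maximization only if γ₀ < 1/λ_AP. (Feasibility lemma: the target SINR must be below the reciprocal of the AP density.) -/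
open Real

/-- Feasibility lemma: for every number of antennas `N > 0`, the SINR lower bound
`1/γ̌(N)` is strictly below `1/λ`, the reciprocal of the access-point density; hence a
target SINR `γ₀` is feasible only if `γ₀ < 1/λ_AP`. -/
theorem sinr_bound_below_reciprocal_density
    (α K ρtr ρd lam ζ A : ℝ)
    (hα : 2 < α) (hK : 2 ≤ K) (hA : 1 ≤ A) (hlam : 0 < lam) (hζ : 0 < ζ)
    (hρtr : 0 < ρtr) (hρd : 0 < ρd) :
    let invSinr : ℝ → ℝ := fun N =>
      A * ((α - 2) / (α * Real.pi * N * ρd) + (K - 1))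
        + (ζ / (α * Real.pi * K * ρtr)) * ((K - 1) * (α - 2) + (α - 1) / (N * ρd))
        + lam * (K - 1)
    ∀ N : ℝ, 0 < N → 1 / invSinr N < 1 / lam := by
  intro invSinr N hN
  have hπ := Real.pi_pos
  have hα0 : 0 < α := by linarith
  have h1 : 0 < (α - 2) / (α * Real.pi * N * ρd) :=
    div_pos (by linarith) (by positivity)
  have h2 : 0 < (ζ / (α * Real.pi * K * ρtr)) * ((K - 1) * (α - 2) + (α - 1) / (N * ρd)) := by
    have : 0 < (α - 1) / (N * ρd) := div_pos (by linarith) (by positivity)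
    have hK1 : 0 < (K - 1) * (α - 2) := mul_pos (by linarith) (by linarith)
    exact mul_pos (div_pos hζ (by positivity)) (by linarith)
  have h3 : lam ≤ lam * (K - 1) := by nlinarith
  have h4 : lam < invSinr N := by
    have hA1 : A * ((α - 2) / (α * Real.pi * N * ρd) + (K - 1)) > 0 := by nlinarith
    simp only [invSinr]
    nlinarith
  exact one_div_lt_one_div_of_lt hlam h4
end
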